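/- Let $(A, \mathfrak{m})$ be a Noetherian local ring, let $\mathfrak{D}$ be a set of derivations of $A$, and let $I$ be a maximally $\mathfrak{D}$-differential ideal of $A$. If the quotient ring $A/I$ has prime characteristic $p > 0$, then $A/I$ has finite length as an $A$-module; in particular, $I$ is an $\mathfrak{m}$-primary ideal and $\dim(A/I) = 0$. -/

import Mathlib

/-- `d` is a derivation of the commutative ring `A`: an additive endomorphism satisfying the
Leibniz rule `d(ab) = a·d(b) + b·d(a)`. -/
def IsDeriv {A : Type*} [CommRing A] (d : A →+ A) : Prop :=
  ∀ a b : A, d (a * b) = a * d b + b * d a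

/-- An ideal `I` is `𝔇`-differential if `d(I) ⊆ I` for every `d ∈ 𝔇`. -/
def IsDiffIdeal {A : Type*} [CommRing A] (𝔇 : Set (A →+ A)) (I : Ideal A) : Prop :=
  ∀ d ∈ 𝔇, ∀ x ∈ I, d x ∈ I

/-- An ideal `I` is maximally `𝔇`-differential if it is a proper `𝔇`-differential ideal and no
ideal `J` with `I ⊊ J ⊊ A` is `𝔇`-differential. -/
def IsMaxDiffIdeal {A : Type*} [CommRing A] (𝔇 : Set (A →+ A)) (I : Ideal A) : Prop :=
  I ≠ ⊤ ∧ IsDiffIdeal 𝔇 I ∧ ∀ J : Ideal A, I < J → J < ⊤ → ¬ IsDiffIdeal 𝔇 J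

/-- Leibniz rule for powers. -/
theorem IsDeriv.map_pow_succ {A : Type*} [CommRing A] {d : A →+ A} (hd : IsDeriv d) (x : A) :
    ∀ n : ℕ, d (x ^ (n + 1)) = ((n + 1 : ℕ) : A) * x ^ n * d x
  | 0 => by simp
  | n + 1 => by
    have h : x ^ (n + 2) = x * x ^ (n + 1) := by ring
    rw [h, hd x (x ^ (n + 1)), hd.map_pow_succ x n]
    push_cast
    ring

/-- If the scalar action of `R` on `M` factors through a surjective ring hom `f : R →+* S`
and `M` is Artinian over `S`, then `M` is Artinian over `R`. -/
theorem isArtinian_of_surj_smul {R S M : Type*} [Semiring R] [Semiring S]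
    [AddCommMonoid M] [Module R M] [Module S M] (f : R →+* S)
    (hf : Function.Surjective f) (hsmul : ∀ (r : R) (x : M), f r • x = r • x)
    (h : IsArtinian S M) : IsArtinian R M := by
  let e : Submodule R M → Submodule S M := fun N =>
    { carrier := N
      add_mem' := fun ha hb => N.add_mem ha hb
      zero_mem' := N.zero_mem
      smul_mem' := fun s x hx => by
        obtain ⟨r, rfl⟩ := hf s
        rw [hsmul]
        exact N.smul_mem r hx }
  rw [isArtinian_iff] at h ⊢
  have hmono : ∀ {N N' : Submodule R M}, N < N' → e N < e N' := by
    intro N N' hlt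
    refine lt_of_le_not_ge (fun x hx => hlt.le hx) fun hle => hlt.not_ge fun x hx => hle hx
  exact Subrelation.wf (fun {N N'} hlt => hmono hlt) (InvImage.wf e h)

/-- Let `(A, 𝔪)` be a Noetherian local ring, `𝔇` a set of derivations of `A`, and `I` a maximally
`𝔇`-differential ideal of `A`.  If `A/I` has prime characteristic `p > 0`, then `A/I` has finite
length as an `A`-module; in particular `I` is `𝔪`-primary and `dim (A/I) = 0`. -/
theorem maxDiffIdeal_finiteLength_of_charP
    {A : Type*} [CommRing A] [IsNoetherianRing A] [IsLocalRing A]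
    (𝔇 : Set (A →+ A)) (h𝔇 : ∀ d ∈ 𝔇, IsDeriv d)
    (I : Ideal A) (hI : IsMaxDiffIdeal 𝔇 I)
    (p : ℕ) (hp : p.Prime) (hchar : CharP (A ⧸ I) p) :
    IsFiniteLength A (A ⧸ I) ∧
      (I.IsPrimary ∧ I.radical = IsLocalRing.maximalIdeal A) ∧
      ringKrullDim (A ⧸ I) = 0 := by
  obtain ⟨hItop, hIdiff, hImax⟩ := hI
  set 𝔪 := IsLocalRing.maximalIdeal A with h𝔪
  have hIle : I ≤ 𝔪 := IsLocalRing.le_maximalIdeal hItop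
  -- `p ∈ I`
  have hpI : ((p : ℕ) : A) ∈ I := by
    have h0 : ((p : ℕ) : A ⧸ I) = 0 := CharP.cast_eq_zero _ _
    have h1 : (Ideal.Quotient.mk I) ((p : ℕ) : A) = 0 := by
      rw [map_natCast]; exact h0
    exact Ideal.Quotient.eq_zero_iff_mem.mp h1
  -- key step: `x ^ p ∈ I` for every `x ∈ 𝔪`
  have key : ∀ x ∈ 𝔪, x ^ p ∈ I := by
    intro x hx
    set J : Ideal A := I ⊔ Ideal.span {x ^ p} with hJ
    have hxpJ : x ^ p ∈ J := Ideal.mem_sup_right (Ideal.subset_span rfl)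
    have hJdiff : IsDiffIdeal 𝔇 J := by
      intro d hd y hy
      obtain ⟨i, hi, z, hz, rfl⟩ := Submodule.mem_sup.mp hy
      obtain ⟨a, rfl⟩ := Ideal.mem_span_singleton'.mp hz
      rw [map_add]
      have hder := h𝔇 d hd
      have hdxp : d (x ^ p) ∈ I := by
        have hp1 : p - 1 + 1 = p := Nat.succ_pred_eq_of_pos hp.pos
        have hform : d (x ^ p) = ((p : ℕ) : A) * (x ^ (p - 1) * d x) := by
          conv_lhs => rw [← hp1]
          rw [hder.map_pow_succ x (p - 1), hp1, mul_assoc]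
        rw [hform]
        exact I.mul_mem_right _ hpI
      have h2 : d (a * x ^ p) ∈ J := by
        rw [hder a (x ^ p)]
        refine J.add_mem ?_ ?_
        · exact Ideal.mem_sup_left (I.mul_mem_left a hdxp)
        · exact J.mul_mem_right _ hxpJ
      exact J.add_mem (Ideal.mem_sup_left (hIdiff d hd i hi)) h2
    have hJle : J ≤ 𝔪 := by
      refine sup_le hIle ?_
      rw [Ideal.span_le, Set.singleton_subset_iff]
      exact Ideal.pow_mem_of_mem 𝔪 hx p hp.pos
    have hJlt : J < ⊤ := lt_of_le_of_lt hJle (lt_top_iff_ne_top.mpr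
      (IsLocalRing.maximalIdeal.isMaximal A).ne_top)
    have hIJ : I ≤ J := le_sup_left
    have hJI : J = I := by
      by_contra hne
      exact hImax J (lt_of_le_of_ne hIJ (Ne.symm hne)) hJlt hJdiff
    rw [← hJI]
    exact hxpJ
  -- the radical of `I` is the maximal ideal
  have hrad : I.radical = 𝔪 := by
    apply le_antisymm
    · exact IsLocalRing.le_maximalIdeal fun h => hItop (Ideal.radical_eq_top.mp h)
    · intro x hx
      exact ⟨p, key x hx⟩
  -- Artinian-ness of `A ⧸ 𝔪 ^ k` for all `k`
  have hart : ∀ k : ℕ, IsArtinian A (A ⧸ (𝔪 ^ k : Ideal A)) := by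
    intro k
    induction k with
    | zero =>
      rw [pow_zero, Ideal.one_eq_top]
      haveI : Subsingleton (A ⧸ (⊤ : Ideal A)) :=
        Submodule.Quotient.subsingleton_iff.mpr rfl
      infer_instance
    | succ k ih =>
      have hle : (𝔪 ^ (k + 1) : Ideal A) ≤ 𝔪 ^ k := Ideal.pow_le_pow_right (Nat.le_succ k)
      set J : Ideal A := 𝔪 ^ (k + 1) with hJdef
      set Jk : Ideal A := 𝔪 ^ k with hJkdef
      let g : (A ⧸ J) →ₗ[A] (A ⧸ Jk) :=
        Submodule.mapQ J Jk LinearMap.id (by simpa using hle)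
      have hg : ∀ y : A, g (Submodule.Quotient.mk y) = Submodule.Quotient.mk y := fun y =>
        Submodule.mapQ_apply _ _ _ _
      set N : Submodule A (A ⧸ J) := Submodule.map J.mkQ (Jk : Submodule A A) with hNdef
      have hker : LinearMap.ker g = N := by
        ext y
        obtain ⟨a, rfl⟩ := Submodule.mkQ_surjective J y
        constructor
        · intro h
          have h0 : g (Submodule.Quotient.mk a) = 0 := h
          rw [hg] at h0
          have haJk : a ∈ Jk := (Submodule.Quotient.mk_eq_zero _).mp h0
          exact ⟨a, haJk, rfl⟩
        · rintro ⟨z, hz, hzy⟩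
          have : g (J.mkQ z) = g (J.mkQ a) := congrArg g hzy
          rw [show J.mkQ z = Submodule.Quotient.mk z from rfl,
            show J.mkQ a = Submodule.Quotient.mk a from rfl, hg, hg] at this
          have : (Submodule.Quotient.mk a : A ⧸ Jk) = Submodule.Quotient.mk z := this.symm
          show g (Submodule.Quotient.mk a) = 0
          rw [hg, this, Submodule.Quotient.mk_eq_zero]
          exact hz
      -- `N` is a finitely generated `A`-module killed by `𝔪`
      have hNfg : N.FG := (IsNoetherian.noetherian (Jk : Submodule A A)).map _
      haveI hNfin : Module.Finite A N := Module.Finite.iff_fg.mpr hNfg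
      have htor : Module.IsTorsionBySet A N (𝔪 : Set A) := by
        rintro ⟨y, hy⟩ ⟨m, hm⟩
        obtain ⟨z, hz, rfl⟩ := hy
        apply Subtype.ext
        show m • (J.mkQ z) = 0
        rw [← map_smul, smul_eq_mul]
        rw [show J.mkQ (m * z) = Submodule.Quotient.mk (m * z) from rfl,
          Submodule.Quotient.mk_eq_zero]
        rw [hJdef, pow_succ']
        exact Ideal.mul_mem_mul hm hz
      letI : Module (A ⧸ 𝔪) N := htor.module
      haveI : IsScalarTower A (A ⧸ 𝔪) N := htor.isScalarTower
      haveI : Module.Finite (A ⧸ 𝔪) N := Module.Finite.of_restrictScalars_finite A _ _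
      haveI hKart : IsArtinianRing (A ⧸ 𝔪) := by
        letI := Ideal.Quotient.field 𝔪
        exact DivisionRing.instIsArtinianRing
      haveI hNKart : IsArtinian (A ⧸ 𝔪) N := isArtinian_of_fg_of_artinian'
      haveI hNart : IsArtinian A N :=
        isArtinian_of_surj_smul (Ideal.Quotient.mk 𝔪) Ideal.Quotient.mk_surjective
          (fun r x => htor.mk_smul r x) hNKart
      haveI := ih
      exact isArtinian_of_range_eq_ker N.subtype g
        ((Submodule.range_subtype N).trans hker.symm)
  -- Artinian-ness of `A ⧸ I`
  obtain ⟨n, hn⟩ := Ideal.exists_radical_pow_le_of_fg I (IsNoetherian.noetherian _)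
  rw [hrad] at hn
  haveI := hart n
  haveI hartI : IsArtinian A (A ⧸ I) := by
    refine isArtinian_of_surjective _ (Submodule.mapQ (𝔪 ^ n) I LinearMap.id (by simpa using hn))
      fun y => ?_
    obtain ⟨a, rfl⟩ := Submodule.mkQ_surjective I y
    exact ⟨Submodule.Quotient.mk a, Submodule.mapQ_apply _ _ _ _⟩
  haveI hnoethI : IsNoetherian A (A ⧸ I) := inferInstance
  -- nontriviality of `A ⧸ I`
  haveI hnt : Nontrivial (A ⧸ I) := Ideal.Quotient.nontrivial_iff.mpr hItop
  -- the prime spectrum of `A ⧸ I` is a singleton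
  have huniq : ∀ P : PrimeSpectrum (A ⧸ I),
      P.asIdeal = 𝔪.map (Ideal.Quotient.mk I) := by
    intro P
    haveI := P.isPrime
    have h1 : I ≤ P.asIdeal.comap (Ideal.Quotient.mk I) := fun x hx => by
      simp [Ideal.mem_comap, Ideal.Quotient.eq_zero_iff_mem.mpr hx]
    haveI hcp : (P.asIdeal.comap (Ideal.Quotient.mk I)).IsPrime := inferInstance
    have heq : P.asIdeal.comap (Ideal.Quotient.mk I) = 𝔪 := by
      apply le_antisymm
      · exact IsLocalRing.le_maximalIdeal hcp.ne_top
      · calc 𝔪 = I.radical := hrad.symm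
          _ ≤ (P.asIdeal.comap (Ideal.Quotient.mk I)).radical := Ideal.radical_mono h1
          _ = P.asIdeal.comap (Ideal.Quotient.mk I) := hcp.radical
    rw [← heq,
      Ideal.map_comap_of_surjective (Ideal.Quotient.mk I) Ideal.Quotient.mk_surjective]
  haveI hsub : Subsingleton (PrimeSpectrum (A ⧸ I)) :=
    ⟨fun P Q => PrimeSpectrum.ext ((huniq P).trans (huniq Q).symm)⟩
  haveI hU : Unique (PrimeSpectrum (A ⧸ I)) := uniqueOfSubsingleton (Classical.arbitrary _)
  refine ⟨?_, ⟨?_, hrad⟩, ?_⟩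
  · exact (isFiniteLength_iff_isNoetherian_isArtinian).mpr ⟨hnoethI, hartI⟩
  · exact Ideal.isPrimary_of_isMaximal_radical
      (hrad ▸ IsLocalRing.maximalIdeal.isMaximal A)
  · show Order.krullDim (PrimeSpectrum (A ⧸ I)) = 0
    exact Order.krullDim_eq_zero_of_unique
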